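/- arXiv:1912.03177 — 5 statements merged into one kernel-verified Lean document; each statement's English description precedes it below -/
import Mathlib

section
/- Let n ≥ 1, λ : Fin n → ℝ, ω : Fin n → ℝ, with grouped weight ω̄(x) = Σ_{j : λ j = x} ω j and support S = { x ∈ Set.range λ : ω̄(x) ≠ 0 }. Define m k = Σ_i ω i * (λ i)^k and the n×n Hankel matrix H with H s t = m (s + t). Then the column space of H (the span of the columns of H in ℝⁿ) equals the span of the Vandermonde vectors { v(x) : x ∈ S }, where v(x) j = x^j for j ∈ Fin n. -/
open Matrix Finset

/-- The column space of the Hankel matrix of moments equals the span of the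
Vandermonde vectors of the support values of the signed spectral measure. -/
theorem hankel_column_space_eq_span_vandermonde (n : ℕ) (hn : 1 ≤ n) (l ω : Fin n → ℝ)
    (m : ℕ → ℝ) (hm : ∀ k, m k = ∑ i : Fin n, ω i * l i ^ k)
    (H : Matrix (Fin n) (Fin n) ℝ) (hH : H = Matrix.of fun s t : Fin n => m ((s : ℕ) + (t : ℕ)))
    (S : Set ℝ)
    (hS : S = {x | x ∈ Set.range l ∧ ∑ j ∈ Finset.univ.filter (fun j => l j = x), ω j ≠ 0}) :
    Submodule.span ℝ (Set.range fun t : Fin n => (fun s : Fin n => H s t)) =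
      Submodule.span ℝ ((fun x : ℝ => fun j : Fin n => x ^ (j : ℕ)) '' S) := by
  classical
  set v : ℝ → Fin n → ℝ := fun x j => x ^ (j : ℕ) with hv
  set wbar : ℝ → ℝ := fun x => ∑ j ∈ Finset.univ.filter (fun j => l j = x), ω j with hwbar
  set S' : Finset ℝ := (Finset.image l Finset.univ).filter (fun x => wbar x ≠ 0) with hS'
  have hSset : S = ↑S' := by
    rw [hS]
    ext x
    simp [hS', hwbar, Set.mem_setOf_eq, Finset.mem_filter, Finset.mem_image, Set.mem_range]
  have key : ∀ K : ℕ, (∑ i : Fin n, ω i * l i ^ K) = ∑ x ∈ S', wbar x * x ^ K := by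
    intro K
    have himg : ∑ x ∈ Finset.image l Finset.univ, wbar x * x ^ K
        = ∑ i : Fin n, ω i * l i ^ K := by
      refine Finset.sum_image' (fun i => ω i * l i ^ K) (fun c _ => ?_)
      rw [hwbar]
      simp only
      rw [Finset.sum_mul]
      apply Finset.sum_congr rfl
      intro i hi
      simp only [Finset.mem_filter, Finset.mem_univ, true_and] at hi
      rw [hi]
    rw [hS', Finset.sum_filter_of_ne, himg]
    intro x _ hne hw
    exact hne (by rw [hw, zero_mul])
  have hHm : ∀ s t : Fin n, H s t = ∑ x ∈ S', (wbar x * x ^ (t : ℕ)) * x ^ (s : ℕ) := by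
    intro s t
    rw [hH]
    simp only [Matrix.of_apply]
    rw [hm, key]
    apply Finset.sum_congr rfl
    intro x _
    rw [pow_add]
    ring
  apply le_antisymm
  · rw [Submodule.span_le]
    rintro _ ⟨t, rfl⟩
    have hcol : (fun s : Fin n => H s t) = ∑ x ∈ S', (wbar x * x ^ (t : ℕ)) • v x := by
      funext s
      simp only [Finset.sum_apply, Pi.smul_apply, smul_eq_mul, hv]
      exact hHm s t
    show (fun s : Fin n => H s t) ∈ Submodule.span ℝ (v '' S)
    rw [hcol]
    refine Submodule.sum_mem _ fun x hx => Submodule.smul_mem _ _ (Submodule.subset_span ?_)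
    exact ⟨x, by rw [hSset]; exact hx, rfl⟩
  · rw [Submodule.span_le]
    rintro _ ⟨x₀, hx₀, rfl⟩
    rw [hSset] at hx₀
    have hx₀' : x₀ ∈ S' := hx₀
    have hwx₀ : wbar x₀ ≠ 0 := (Finset.mem_filter.mp hx₀').2
    set P : Polynomial ℝ := Lagrange.basis S' id x₀ with hP
    have hinj : Set.InjOn (id : ℝ → ℝ) ↑S' := fun a _ b _ h => h
    have hcard : S'.card ≤ n := by
      calc S'.card ≤ (Finset.image l Finset.univ).card := Finset.card_filter_le _ _
        _ ≤ (Finset.univ : Finset (Fin n)).card := Finset.card_image_le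
        _ = n := by simp
    have hdeg : P.natDegree < n := by
      rw [hP, Lagrange.natDegree_basis hinj hx₀']
      omega
    set z : Fin n → ℝ := fun t => P.coeff t / wbar x₀ with hz
    have hevalsum : ∀ x : ℝ, (∑ t : Fin n, z t * x ^ (t : ℕ)) = P.eval x / wbar x₀ := by
      intro x
      rw [Polynomial.eval_eq_sum_range' (lt_of_lt_of_le hdeg (le_refl n)),
        ← Fin.sum_univ_eq_sum_range (fun i => P.coeff i * x ^ i)]
      rw [Finset.sum_div]
      apply Finset.sum_congr rfl
      intro t _
      rw [hz]
      ring
    have hvz : v x₀ = ∑ t : Fin n, z t • (fun s : Fin n => H s t) := by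
      funext s
      simp only [Finset.sum_apply, Pi.smul_apply, smul_eq_mul]
      have : ∀ t : Fin n, z t * H s t = ∑ x ∈ S', wbar x * x ^ (s : ℕ) * (z t * x ^ (t : ℕ)) := by
        intro t
        rw [hHm s t, Finset.mul_sum]
        apply Finset.sum_congr rfl
        intro x _
        ring
      simp_rw [this]
      rw [Finset.sum_comm]
      have : ∀ x ∈ S', (∑ t : Fin n, wbar x * x ^ (s : ℕ) * (z t * x ^ (t : ℕ)))
          = wbar x * x ^ (s : ℕ) * (P.eval x / wbar x₀) := by
        intro x _
        rw [← Finset.mul_sum, hevalsum x]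
      rw [Finset.sum_congr rfl this, Finset.sum_eq_single x₀]
      · have he : Polynomial.eval x₀ P = 1 := by
          have := Lagrange.eval_basis_self hinj hx₀'
          simpa using this
        rw [hP] at he ⊢
        rw [he]
        field_simp [hv]
        rfl
      · intro x hx hne
        have : P.eval x = 0 := by
          have := Lagrange.eval_basis_of_ne (v := (id : ℝ → ℝ)) (Ne.symm hne) hx
          simpa using this
        rw [this]
        ring
      · intro h
        exact absurd hx₀' h
    show v x₀ ∈ Submodule.span ℝ (Set.range fun t : Fin n => (fun s : Fin n => H s t))
    rw [hvz]
    exact Submodule.sum_mem _ fun t _ =>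
      Submodule.smul_mem _ _ (Submodule.subset_span ⟨t, rfl⟩)
end

section
/- Let n ≥ 1, λ : Fin n → ℝ, ω : Fin n → ℝ, with grouped weight ω̄(x) = Σ_{j : λ j = x} ω j and support S = { x ∈ Set.range λ : ω̄(x) ≠ 0 }. Define m k = Σ_i ω i * (λ i)^k and the n×n Hankel matrix H with H s t = m (s + t). Then the rank of H equals the cardinality of S. -/
open Matrix Finset

/-- **Lemma 2.** The rank of the Hankel matrix of moments equals the cardinality of the
support of the signed spectral measure. -/
theorem hankel_rank_eq_support_card (n : ℕ) (hn : 1 ≤ n) (l ω : Fin n → ℝ)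
    (m : ℕ → ℝ) (hm : ∀ k, m k = ∑ i : Fin n, ω i * l i ^ k)
    (H : Matrix (Fin n) (Fin n) ℝ) (hH : H = Matrix.of fun s t : Fin n => m ((s : ℕ) + (t : ℕ)))
    (S : Finset ℝ)
    (hS : S = (Finset.univ.image l).filter
        (fun x => ∑ j ∈ Finset.univ.filter (fun j => l j = x), ω j ≠ 0)) :
    H.rank = S.card := by
  classical
  set w : ℝ → ℝ := fun x => ∑ j ∈ Finset.univ.filter (fun j => l j = x), ω j with hw
  -- grouped moment formula over S
  have hmS : ∀ k, m k = ∑ x ∈ S, w x * x ^ k := by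
    intro k
    rw [hm]
    have h1 : ∑ i : Fin n, ω i * l i ^ k
        = ∑ x ∈ Finset.univ.image l, w x * x ^ k := by
      rw [← Finset.sum_fiberwise_of_maps_to (fun i _ => Finset.mem_image_of_mem l (mem_univ i))
        (fun i => ω i * l i ^ k)]
      refine Finset.sum_congr rfl fun x hx => ?_
      rw [hw]
      simp only [Finset.sum_mul]
      refine Finset.sum_congr rfl fun j hj => ?_
      rw [Finset.mem_filter] at hj
      rw [hj.2]
    rw [h1, hS]
    refine (Finset.sum_filter_of_ne ?_).symm
    intro x hx hne h0
    exact hne (by rw [show w x = 0 from h0, zero_mul])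
  set r := S.card with hr
  have hr_le : r ≤ n := by
    rw [hr, hS]
    calc ((Finset.univ.image l).filter _).card ≤ (Finset.univ.image l).card :=
          Finset.card_filter_le _ _
      _ ≤ (Finset.univ : Finset (Fin n)).card := Finset.card_image_le
      _ = n := by simp
  set f : Fin r → ℝ := fun i => S.orderEmbOfFin rfl i with hf
  have hf_inj : Function.Injective f := (S.orderEmbOfFin rfl).injective
  have hf_mem : ∀ i, f i ∈ S := fun i => S.orderEmbOfFin_mem rfl i
  have hw_ne : ∀ i, w (f i) ≠ 0 := by
    intro i
    have := hf_mem i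
    rw [hS, Finset.mem_filter] at this
    exact this.2
  -- sums over S as sums over Fin r
  have himg : Finset.image f Finset.univ = S := by
    apply Finset.coe_injective
    rw [Finset.coe_image, Finset.coe_univ, Set.image_univ, hf]
    exact Finset.range_orderEmbOfFin S rfl
  have hsumS : ∀ g : ℝ → ℝ, ∑ x ∈ S, g x = ∑ i : Fin r, g (f i) := by
    intro g
    rw [← himg, Finset.sum_image (fun a _ b _ h => hf_inj h)]
  -- factorization H = W * V
  set W : Matrix (Fin n) (Fin r) ℝ := Matrix.of (fun s i => w (f i) * f i ^ (s : ℕ)) with hWdef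
  set V : Matrix (Fin r) (Fin n) ℝ := Matrix.of (fun i t => f i ^ (t : ℕ)) with hVdef
  have hHWV : H = W * V := by
    rw [hH]
    ext s t
    simp only [Matrix.of_apply, Matrix.mul_apply, hWdef, hVdef, hmS, hsumS]
    refine Finset.sum_congr rfl fun i _ => ?_
    rw [pow_add]; ring
  -- upper bound
  have hub : H.rank ≤ r := by
    rw [hHWV]
    exact le_trans (Matrix.rank_mul_le_right W V)
      (le_trans V.rank_le_card_height (by simp))
  -- lower bound
  set g : Fin r → Fin n := Fin.castLE hr_le with hg
  set E : Matrix (Fin r) (Fin n) ℝ := Matrix.of (fun i t => if t = g i then 1 else 0) with hE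
  set H' : Matrix (Fin r) (Fin r) ℝ := E * H * Eᵀ with hH'
  have hsub : ∀ i j, H' i j = H (g i) (g j) := by
    intro i j
    simp [hH', hE, Matrix.mul_apply, boole_mul, mul_boole, Finset.sum_ite_eq,
      Finset.sum_ite_eq']
  have hH'eq : H' = (Matrix.vandermonde f)ᵀ * Matrix.diagonal (fun i => w (f i))
      * Matrix.vandermonde f := by
    ext i j
    rw [hsub i j, hH]
    simp only [Matrix.mul_apply, Matrix.transpose_apply, Matrix.diagonal_apply,
      Matrix.vandermonde_apply, Matrix.of_apply, mul_ite, mul_zero, Finset.sum_ite_eq',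
      Finset.mem_univ, if_true, hmS, hsumS, ite_mul, zero_mul]
    refine Finset.sum_congr rfl fun k _ => ?_
    rw [pow_add, hg]
    simp only [Fin.coe_castLE]
    ring
  have hdet : H'.det ≠ 0 := by
    rw [hH'eq]
    simp only [Matrix.det_mul, Matrix.det_transpose, Matrix.det_diagonal]
    refine mul_ne_zero (mul_ne_zero ?_ ?_) ?_
    · exact Matrix.det_vandermonde_ne_zero_iff.mpr hf_inj
    · exact Finset.prod_ne_zero_iff.mpr fun i _ => hw_ne i
    · exact Matrix.det_vandermonde_ne_zero_iff.mpr hf_inj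
  have hrankH' : H'.rank = r := by
    rw [Matrix.rank_of_isUnit H' (by
      rw [Matrix.isUnit_iff_isUnit_det]
      exact isUnit_iff_ne_zero.mpr hdet)]
    simp
  have hlb : r ≤ H.rank := by
    calc r = H'.rank := hrankH'.symm
      _ ≤ (E * H).rank := Matrix.rank_mul_le_left (E * H) Eᵀ
      _ ≤ H.rank := Matrix.rank_mul_le_right E H
  omega
end

section
/- Let n ≥ 1, λ : Fin n → ℝ, ω : Fin n → ℝ, with grouped weight ω̄(x) = Σ_{j : λ j = x} ω j and support S = { x ∈ Set.range λ : ω̄(x) ≠ 0 }; let r = |S| and assume r ≥ 1. Define the measurements y k = Σ_i ω i * (λ i)^k. Then (a) the r×r Hankel matrix H_r with (H_r) s t = y (s + t) is invertible, and (b) defining the coefficient vector α = - H_r⁻¹ *ᵥ (y r, y (r+1), …, y (2r−1)), the monic polynomial X^r + Σ_{j=0}^{r-1} α_j X^j equals Π_{x ∈ S} (X − x); in particular, every element of S is a root of this polynomial. -/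
open Matrix Polynomial Finset

/-- **Theorem 1.** From the measurements `y[k] = Σ_i ω_i λ_i^k`, with `r` the cardinality
of the support `S` of the spectral measure, the `r × r` Hankel matrix of measurements is
invertible, and the monic polynomial whose lower coefficients are
`α = -H_r⁻¹ (y_r, …, y_{2r-1})` equals `Π_{x ∈ S} (X - x)`; in particular every
element of `S` is a root of it. -/
theorem laplacian_eigenvalue_recovery (n : ℕ) (hn : 1 ≤ n) (l ω : Fin n → ℝ)
    (y : ℕ → ℝ) (hy : ∀ k, y k = ∑ i : Fin n, ω i * l i ^ k)
    (S : Finset ℝ)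
    (hS : S = (Finset.univ.image l).filter
        (fun x => ∑ j ∈ Finset.univ.filter (fun j => l j = x), ω j ≠ 0))
    (r : ℕ) (hr : r = S.card) (hr1 : 1 ≤ r)
    (Hr : Matrix (Fin r) (Fin r) ℝ)
    (hHr : Hr = Matrix.of fun s t : Fin r => y ((s : ℕ) + (t : ℕ)))
    (α : Fin r → ℝ) (hα : α = -(Hr⁻¹ *ᵥ fun j : Fin r => y (r + (j : ℕ)))) :
    IsUnit Hr ∧
      (Polynomial.X ^ r + ∑ j : Fin r, Polynomial.C (α j) * Polynomial.X ^ (j : ℕ)) =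
        ∏ x ∈ S, (Polynomial.X - Polynomial.C x) ∧
      ∀ x ∈ S,
        (Polynomial.X ^ r + ∑ j : Fin r, Polynomial.C (α j) * Polynomial.X ^ (j : ℕ)).IsRoot
          x := by
  -- grouped weight
  set w : ℝ → ℝ := fun x => ∑ j ∈ Finset.univ.filter (fun j => l j = x), ω j with hw
  -- measurements as sum over support
  have key : ∀ k : ℕ, y k = ∑ x ∈ S, w x * x ^ k := by
    intro k
    have h2 : y k = ∑ x ∈ Finset.univ.image l, w x * x ^ k := by
      rw [hy k,
        ← Finset.sum_fiberwise_of_maps_to (fun i _ => Finset.mem_image_of_mem l (mem_univ i))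
          (fun i => ω i * l i ^ k)]
      refine Finset.sum_congr rfl fun x _ => ?_
      simp only [hw]
      rw [Finset.sum_mul]
      exact Finset.sum_congr rfl fun i hi => by rw [(Finset.mem_filter.mp hi).2]
    rw [h2, hS]
    exact (Finset.sum_filter_of_ne fun x _ hx => left_ne_zero_of_mul hx).symm
  subst hr
  -- enumeration of S
  set node : Fin S.card → ℝ := fun t => ((S.equivFin.symm t : { x // x ∈ S }) : ℝ) with hnode
  have hnode_mem : ∀ t, node t ∈ S := fun t => (S.equivFin.symm t).2
  have hnode_inj : Function.Injective node := by
    intro a b hab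
    have := Subtype.ext (p := fun x => x ∈ S) hab
    exact S.equivFin.symm.injective this
  have key' : ∀ k : ℕ, y k = ∑ t : Fin S.card, w (node t) * node t ^ k := by
    intro k
    rw [key k, ← Finset.sum_coe_sort S (fun x => w x * x ^ k),
      ← Equiv.sum_comp S.equivFin.symm (fun x : { x // x ∈ S } => w (x : ℝ) * (x : ℝ) ^ k)]
  have hwnode : ∀ t, w (node t) ≠ 0 := by
    intro t
    have := hnode_mem t
    rw [hS, Finset.mem_filter] at this
    exact this.2
  -- Hankel factorization
  set V : Matrix (Fin S.card) (Fin S.card) ℝ := (Matrix.vandermonde node)ᵀ with hV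
  set D : Matrix (Fin S.card) (Fin S.card) ℝ := Matrix.diagonal (fun t => w (node t)) with hD
  have hfact : Hr = V * D * Vᵀ := by
    rw [hHr]
    ext s t
    simp only [Matrix.mul_apply, Matrix.of_apply, Matrix.transpose_apply, hV, hD,
      Matrix.vandermonde, Matrix.diagonal, Matrix.of_apply]
    rw [key' ((s : ℕ) + (t : ℕ))]
    refine Finset.sum_congr rfl fun u _ => ?_
    rw [Finset.sum_eq_single u (fun v _ hv => by simp [hv]) (by simp)]
    simp [pow_add]
    ring
  have hWdet : (Matrix.vandermonde node).det ≠ 0 :=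
    Matrix.det_vandermonde_ne_zero_iff.mpr hnode_inj
  have hVdet : V.det ≠ 0 := by
    rw [hV, Matrix.det_transpose]
    exact hWdet
  have hDdet : D.det ≠ 0 := by
    rw [hD, Matrix.det_diagonal]
    exact Finset.prod_ne_zero_iff.mpr fun t _ => hwnode t
  have hVtdet : Vᵀ.det ≠ 0 := by
    rw [Matrix.det_transpose]
    first | exact hVdet | exact hWdet
  have hdet : Hr.det ≠ 0 := by
    have hd : Hr.det = V.det * D.det * Vᵀ.det := by rw [hfact, det_mul, det_mul]
    rw [hd]
    exact mul_ne_zero (mul_ne_zero hVdet hDdet) hVtdet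
  have hunit : IsUnit Hr := (Matrix.isUnit_iff_isUnit_det Hr).mpr (isUnit_iff_ne_zero.mpr hdet)
  -- the target polynomial
  set p : Polynomial ℝ := ∏ x ∈ S, (Polynomial.X - Polynomial.C x) with hp
  have hmonic : p.Monic := monic_prod_of_monic _ _ fun x _ => monic_X_sub_C x
  have hdeg : p.natDegree = S.card := by
    rw [hp, Polynomial.natDegree_prod _ _ fun x _ => X_sub_C_ne_zero x]
    simp [Polynomial.natDegree_X_sub_C]
  have hcoef : p.coeff S.card = 1 := by
    have := hmonic.coeff_natDegree
    rwa [hdeg] at this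
  -- expansion of p
  have hexp : p = Polynomial.X ^ S.card +
      ∑ j : Fin S.card, Polynomial.C (p.coeff (j : ℕ)) * Polynomial.X ^ (j : ℕ) := by
    conv_lhs => rw [p.as_sum_range' (S.card + 1) (by omega)]
    simp only [← Polynomial.C_mul_X_pow_eq_monomial]
    rw [Finset.sum_range_succ, hcoef, Polynomial.C_1, one_mul, add_comm,
      ← Fin.sum_univ_eq_sum_range
        (fun j => Polynomial.C (p.coeff j) * Polynomial.X ^ j) S.card]
  -- roots of p on S
  have hroot : ∀ x ∈ S, p.eval x = 0 := by
    intro x hx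
    rw [hp, Polynomial.eval_prod]
    exact Finset.prod_eq_zero hx (by simp)
  have hrooteq : ∀ x ∈ S, x ^ S.card + ∑ j : Fin S.card, p.coeff (j : ℕ) * x ^ (j : ℕ) = 0 := by
    intro x hx
    have := hroot x hx
    rw [hexp] at this
    simpa [Polynomial.eval_finset_sum] using this
  -- the linear system
  set c : Fin S.card → ℝ := fun j => p.coeff (j : ℕ) with hc
  have hsys : Hr *ᵥ c = -(fun j : Fin S.card => y (S.card + (j : ℕ))) := by
    funext s
    simp only [Matrix.mulVec, dotProduct, hHr, Matrix.of_apply, Pi.neg_apply]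
    have h3 : ∀ t : Fin S.card, y ((s : ℕ) + (t : ℕ)) * c t
        = ∑ u : Fin S.card, w (node u) * node u ^ (s : ℕ) * (c t * node u ^ (t : ℕ)) := by
      intro t
      rw [key' ((s : ℕ) + (t : ℕ)), Finset.sum_mul]
      refine Finset.sum_congr rfl fun u _ => ?_
      rw [pow_add]; ring
    rw [Finset.sum_congr rfl fun t _ => h3 t, Finset.sum_comm]
    have h4 : ∀ u : Fin S.card,
        ∑ t : Fin S.card, w (node u) * node u ^ (s : ℕ) * (c t * node u ^ (t : ℕ))
        = -(w (node u) * node u ^ (S.card + (s : ℕ)))  := by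
      intro u
      rw [← Finset.mul_sum]
      have h5 : ∑ t : Fin S.card, c t * node u ^ (t : ℕ) = -(node u ^ S.card) := by
        have := hrooteq (node u) (hnode_mem u)
        simp only [hc]
        linarith [this]
      rw [h5, pow_add]
      ring
    rw [Finset.sum_congr rfl fun u _ => h4 u, Finset.sum_neg_distrib, key' (S.card + (s : ℕ))]
  have hαc : α = c := by
    have h1 : Hr⁻¹ *ᵥ (Hr *ᵥ c) = c := by
      rw [Matrix.mulVec_mulVec, Matrix.nonsing_inv_mul Hr (isUnit_iff_ne_zero.mpr hdet),
        Matrix.one_mulVec]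
    rw [hsys, Matrix.mulVec_neg] at h1
    rw [hα]
    exact h1
  refine ⟨hunit, ?_, ?_⟩
  · simp only [hαc, hc]
    exact hexp.symm
  · intro x hx
    have h6 := hrooteq x hx
    simp only [hαc, hc, Polynomial.IsRoot, Polynomial.eval_add, Polynomial.eval_pow,
      Polynomial.eval_X, Polynomial.eval_finset_sum, Polynomial.eval_mul, Polynomial.eval_C]
    exact h6
end

section
/- Let n, d ≥ 1, let L be an n×n real matrix, A a d×d real matrix, c, x₀ ∈ ℝⁿ, and γ, β ∈ ℝᵈ. Then for every k ∈ ℕ, (c ⊗ γ)ᵀ *ᵥ ((I_n ⊗ A + L ⊗ I_d)^k *ᵥ (x₀ ⊗ β)) = Σ_{s=0}^{k} (k choose s) * (cᵀ L^s x₀) * (γᵀ A^{k−s} β), where ⊗ on vectors denotes the Kronecker product of vectors and ⊗ on matrices the Kronecker product of matrices. -/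
open Matrix Finset
open scoped Kronecker

/-- Kronecker product of two vectors. -/
def vecKron {n d : ℕ} (x : Fin n → ℝ) (y : Fin d → ℝ) : Fin n × Fin d → ℝ :=
  fun p => x p.1 * y p.2

lemma kron_mulVec {n d : ℕ} (M : Matrix (Fin n) (Fin n) ℝ) (N : Matrix (Fin d) (Fin d) ℝ)
    (x : Fin n → ℝ) (y : Fin d → ℝ) :
    (M ⊗ₖ N) *ᵥ vecKron x y = vecKron (M *ᵥ x) (N *ᵥ y) := by
  funext p
  obtain ⟨i, j⟩ := p
  simp only [mulVec, dotProduct, vecKron, Matrix.kroneckerMap_apply, Fintype.sum_prod_type]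
  rw [Finset.sum_mul_sum]
  apply Finset.sum_congr rfl; intro a _
  apply Finset.sum_congr rfl; intro b _
  ring

lemma dot_kron {n d : ℕ} (c u : Fin n → ℝ) (γ v : Fin d → ℝ) :
    vecKron c γ ⬝ᵥ vecKron u v = (c ⬝ᵥ u) * (γ ⬝ᵥ v) := by
  simp only [dotProduct, vecKron, Fintype.sum_prod_type]
  rw [Finset.sum_mul_sum]
  apply Finset.sum_congr rfl; intro a _
  apply Finset.sum_congr rfl; intro b _
  ring

lemma kron_one_pow {n d : ℕ} (L : Matrix (Fin n) (Fin n) ℝ) (s : ℕ) :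
    (L ⊗ₖ (1 : Matrix (Fin d) (Fin d) ℝ)) ^ s = (L ^ s) ⊗ₖ 1 := by
  induction s with
  | zero => simp [Matrix.one_kronecker_one]
  | succ s ih => rw [pow_succ, ih, ← Matrix.mul_kronecker_mul, mul_one, pow_succ]

lemma one_kron_pow {n d : ℕ} (A : Matrix (Fin d) (Fin d) ℝ) (t : ℕ) :
    ((1 : Matrix (Fin n) (Fin n) ℝ) ⊗ₖ A) ^ t = 1 ⊗ₖ (A ^ t) := by
  induction t with
  | zero => simp [Matrix.one_kronecker_one]
  | succ t ih => rw [pow_succ, ih, ← Matrix.mul_kronecker_mul, mul_one, pow_succ]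

lemma dotProduct_sum' {m : Type*} [Fintype m] {ι : Type*} (F : Finset ι)
    (v : m → ℝ) (w : ι → m → ℝ) :
    v ⬝ᵥ (∑ s ∈ F, w s) = ∑ s ∈ F, v ⬝ᵥ w s := by
  simp only [dotProduct, Finset.sum_apply, Finset.mul_sum]
  rw [Finset.sum_comm]

lemma sum_mulVec' {m : Type*} [Fintype m] {ι : Type*} (F : Finset ι)
    (M : ι → Matrix m m ℝ) (v : m → ℝ) :
    (∑ s ∈ F, M s) *ᵥ v = ∑ s ∈ F, M s *ᵥ v := by
  funext i
  simp only [mulVec, dotProduct, Matrix.sum_apply, Finset.sum_mul, Finset.sum_apply]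
  rw [Finset.sum_comm]

lemma nsmul_mulVec' {m : Type*} [Fintype m] (a : ℕ) (M : Matrix m m ℝ) (v : m → ℝ) :
    (a • M) *ᵥ v = a • (M *ᵥ v) := by
  funext i
  simp [mulVec, dotProduct, Finset.smul_sum, smul_mul_assoc, mul_assoc]

/-- Observation formula for the coupled network:
`(c ⊗ γ)ᵀ (I_n ⊗ A + L ⊗ I_d)^k (x₀ ⊗ β) = Σ_{s=0}^k C(k,s) (cᵀ L^s x₀)(γᵀ A^{k-s} β)`. -/
theorem multiagent_observation_formula (n d : ℕ) (hn : 1 ≤ n) (hd : 1 ≤ d)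
    (L : Matrix (Fin n) (Fin n) ℝ) (A : Matrix (Fin d) (Fin d) ℝ)
    (c x₀ : Fin n → ℝ) (γ β : Fin d → ℝ) (k : ℕ) :
    vecKron c γ ⬝ᵥ
        (((1 : Matrix (Fin n) (Fin n) ℝ) ⊗ₖ A + L ⊗ₖ (1 : Matrix (Fin d) (Fin d) ℝ)) ^ k *ᵥ
          vecKron x₀ β) =
      ∑ s ∈ Finset.range (k + 1),
        (k.choose s : ℝ) * (c ⬝ᵥ (L ^ s *ᵥ x₀)) * (γ ⬝ᵥ (A ^ (k - s) *ᵥ β)) := by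
  have hcomm : Commute (L ⊗ₖ (1 : Matrix (Fin d) (Fin d) ℝ))
      ((1 : Matrix (Fin n) (Fin n) ℝ) ⊗ₖ A) := by
    unfold Commute SemiconjBy
    rw [← Matrix.mul_kronecker_mul, ← Matrix.mul_kronecker_mul]
    simp
  rw [add_comm, Commute.add_pow hcomm]
  have hterm : ∀ s : ℕ,
      (L ⊗ₖ (1 : Matrix (Fin d) (Fin d) ℝ)) ^ s
        * ((1 : Matrix (Fin n) (Fin n) ℝ) ⊗ₖ A) ^ (k - s) = (L ^ s) ⊗ₖ (A ^ (k - s)) := by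
    intro s
    rw [kron_one_pow, one_kron_pow, ← Matrix.mul_kronecker_mul, mul_one, one_mul]
  simp only [hterm]
  have hsmul : ∀ s : ℕ, (L ^ s) ⊗ₖ (A ^ (k - s)) * (k.choose s : Matrix (Fin n × Fin d) (Fin n × Fin d) ℝ)
      = k.choose s • ((L ^ s) ⊗ₖ (A ^ (k - s))) := by
    intro s
    rw [← nsmul_eq_mul']
  simp only [hsmul]
  rw [sum_mulVec', dotProduct_sum']
  apply Finset.sum_congr rfl
  intro s _
  rw [nsmul_mulVec', kron_mulVec, dotProduct_smul, dot_kron, nsmul_eq_mul, mul_assoc]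
end

section
/- Let n ≥ 1, λ : Fin n → ℝ, U an n×n real orthogonal matrix (Uᵀ U = I_n), L = U (Matrix.diagonal λ) Uᵀ, and fix τ > 0, c, x₀ ∈ ℝⁿ. Define the sampled observations y k = cᵀ *ᵥ (exp(−(k*τ) • L) *ᵥ x₀) for k ∈ ℕ, the weights ω i = (Uᵀ *ᵥ c) i * (Uᵀ *ᵥ x₀) i, the grouped weight ω̄(μ) = Σ_{j : λ j = μ} ω j, and the support S = { Real.exp(−μ*τ) : μ ∈ Set.range λ, ω̄(μ) ≠ 0 }; let r = |S| and assume r ≥ 1. Then the r×r Hankel matrix H_r with (H_r) s t = y (s + t) is invertible, and with α = −H_r⁻¹ *ᵥ (y r, …, y (2r−1)), the polynomial X^r + Σ_{j<r} α_j X^j equals Π_{z ∈ S} (X − z); in particular, for every eigenvalue value μ of L with ω̄(μ) ≠ 0, the number e^{−μτ} is a root of this polynomial. -/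
open Matrix Polynomial Finset


lemma prony_aux (S : Finset ℝ) (w : ℝ → ℝ) (hw : ∀ t ∈ S, w t ≠ 0)
    (y : ℕ → ℝ) (hy : ∀ k, y k = ∑ t ∈ S, w t * t ^ k)
    (Hr : Matrix (Fin S.card) (Fin S.card) ℝ)
    (hHr : Hr = Matrix.of fun s t : Fin S.card => y ((s : ℕ) + (t : ℕ))) :
    IsUnit Hr ∧ ∀ α : Fin S.card → ℝ,
      α = -(Hr⁻¹ *ᵥ fun j : Fin S.card => y (S.card + (j : ℕ))) →
      (Polynomial.X ^ S.card + ∑ j : Fin S.card, Polynomial.C (α j) * Polynomial.X ^ (j : ℕ)) =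
        ∏ z ∈ S, (Polynomial.X - Polynomial.C z) := by
  classical
  -- nodes
  set z : Fin S.card → ℝ := fun j => ((S.equivFin.symm j : S) : ℝ) with hz
  have hzinj : Function.Injective z := fun a b h => by
    have := Subtype.ext (p := (· ∈ S)) h
    simpa using S.equivFin.symm.injective this
  have hzmem : ∀ j, z j ∈ S := fun j => (S.equivFin.symm j).2
  have hsum : ∀ f : ℝ → ℝ, ∑ t ∈ S, f t = ∑ j : Fin S.card, f (z j) := by
    intro f
    rw [← Finset.sum_coe_sort S f]
    exact (Fintype.sum_equiv S.equivFin.symm _ _ (fun j => rfl)).symm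
  have hyz : ∀ k, y k = ∑ j : Fin S.card, w (z j) * z j ^ k := fun k => (hy k).trans (hsum _)
  -- Vandermonde factorization
  set V : Matrix (Fin S.card) (Fin S.card) ℝ := Matrix.of fun s j : Fin S.card => z j ^ (s : ℕ)
    with hV
  have hfact : Hr = V * Matrix.diagonal (fun j => w (z j)) * Vᵀ := by
    ext s t
    rw [hHr]
    show y ((s : ℕ) + (t : ℕ)) = _
    rw [Matrix.mul_apply]
    simp only [Matrix.mul_diagonal, Matrix.transpose_apply, hV, Matrix.of_apply]
    rw [hyz]
    refine Finset.sum_congr rfl fun j _ => ?_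
    rw [pow_add]; ring
  have hdetV : V.det ≠ 0 := by
    have : V = (Matrix.vandermonde z)ᵀ := by
      ext s j; simp [hV, Matrix.vandermonde]
    rw [this, Matrix.det_transpose, Matrix.det_vandermonde_ne_zero_iff]
    exact hzinj
  have hdet : Hr.det ≠ 0 := by
    rw [hfact, Matrix.det_mul, Matrix.det_mul, Matrix.det_transpose, Matrix.det_diagonal]
    exact mul_ne_zero (mul_ne_zero hdetV (Finset.prod_ne_zero_iff.2 fun j _ => hw _ (hzmem j)))
      hdetV
  have hunit : IsUnit Hr := (Matrix.isUnit_iff_isUnit_det Hr).2 (isUnit_iff_ne_zero.2 hdet)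
  refine ⟨hunit, fun α hα => ?_⟩
  -- the target polynomial
  set p : Polynomial ℝ := ∏ t ∈ S, (Polynomial.X - Polynomial.C t) with hp
  have hpm : p.Monic := monic_prod_of_monic _ _ fun t _ => monic_X_sub_C t
  have hpd : p.natDegree = S.card := by
    rw [hp, Polynomial.natDegree_prod _ _ fun t _ => X_sub_C_ne_zero t]
    simp
  set β : Fin S.card → ℝ := fun j => p.coeff (j : ℕ) with hβ
  have hc : p.coeff S.card = 1 := by
    have := hpm.coeff_natDegree; rwa [hpd] at this
  -- evaluation identity at nodes
  have hkey : ∀ t ∈ S, t ^ S.card + ∑ j : Fin S.card, β j * t ^ (j : ℕ) = 0 := by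
    intro t ht
    have hev : p.eval t = 0 := by
      rw [hp, Polynomial.eval_prod]
      exact Finset.prod_eq_zero ht (by simp)
    have h2 := Polynomial.eval_eq_sum_range' (p := p) (n := S.card + 1) (by omega) t
    rw [Finset.sum_range_succ, hc, one_mul, hev] at h2
    show t ^ S.card + ∑ j : Fin S.card, p.coeff (j : ℕ) * t ^ (j : ℕ) = 0
    rw [Fin.sum_univ_eq_sum_range (fun j => p.coeff j * t ^ j) S.card]
    linarith [h2]
  -- β satisfies the linear system
  have hsys : Hr *ᵥ β = -(fun j : Fin S.card => y (S.card + (j : ℕ))) := by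
    funext s
    simp only [Matrix.mulVec, dotProduct, hHr, Matrix.of_apply, Pi.neg_apply]
    have h1 : ∀ j : Fin S.card, y ((s : ℕ) + (j : ℕ)) * β j
        = ∑ i : Fin S.card, (w (z i) * z i ^ (s : ℕ)) * (β j * z i ^ (j : ℕ)) := by
      intro j
      rw [hyz, Finset.sum_mul]
      refine Finset.sum_congr rfl fun i _ => ?_
      rw [pow_add]; ring
    rw [Finset.sum_congr rfl fun j _ => h1 j, Finset.sum_comm]
    have h2 : ∀ i : Fin S.card,
        ∑ j : Fin S.card, (w (z i) * z i ^ (s : ℕ)) * (β j * z i ^ (j : ℕ))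
        = (w (z i) * z i ^ (s : ℕ)) * (- z i ^ S.card) := by
      intro i
      rw [← Finset.mul_sum]
      congr 1
      have := hkey (z i) (hzmem i)
      linarith [this]
    rw [Finset.sum_congr rfl fun i _ => h2 i, hyz, ← Finset.sum_neg_distrib]
    refine Finset.sum_congr rfl fun i _ => ?_
    rw [pow_add]; ring
  -- hence α = β
  have hinv : Hr⁻¹ *ᵥ (Hr *ᵥ β) = β := by
    rw [Matrix.mulVec_mulVec,
      Matrix.nonsing_inv_mul Hr ((Matrix.isUnit_iff_isUnit_det Hr).1 hunit), Matrix.one_mulVec]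
  have hαβ : α = β := by
    have : (fun j : Fin S.card => y (S.card + (j : ℕ)))
        = -(Hr *ᵥ β) := by rw [hsys, neg_neg]
    rw [hα, this, Matrix.mulVec_neg, hinv, neg_neg]
  -- final polynomial identity
  rw [hαβ]
  have hexp : p = ∑ i ∈ Finset.range (S.card + 1), Polynomial.C (p.coeff i) * Polynomial.X ^ i := by
    have := p.as_sum_range_C_mul_X_pow
    rwa [hpd] at this
  conv_rhs => rw [hexp]
  rw [Finset.sum_range_succ, hc, Polynomial.C_1, one_mul]
  show Polynomial.X ^ S.card
      + ∑ j : Fin S.card, Polynomial.C (p.coeff (j : ℕ)) * Polynomial.X ^ (j : ℕ) = _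
  rw [Fin.sum_univ_eq_sum_range (fun j => Polynomial.C (p.coeff j) * Polynomial.X ^ j) S.card,
    add_comm]

/-- **Theorem 1 applied to the continuous-time single-integrator network.** The sampled
observations `y_k = cᵀ e^{-Lkτ} x₀` give an invertible Hankel matrix of size `r = |S|`,
where `S = {e^{-μτ} : μ eigenvalue with nonzero grouped weight}`, and the polynomial with
coefficients `α = -H_r⁻¹ (y_r, …, y_{2r-1})` equals `Π_{z ∈ S} (X - z)`; in particular
`e^{-μτ}` is a root for each eigenvalue value `μ` with nonzero grouped weight. -/
theorem ct_laplacian_eigenvalue_recovery (n : ℕ) (hn : 1 ≤ n) (l : Fin n → ℝ)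
    (U : Matrix (Fin n) (Fin n) ℝ) (hU : Uᵀ * U = 1)
    (L : Matrix (Fin n) (Fin n) ℝ) (hL : L = U * Matrix.diagonal l * Uᵀ)
    (τ : ℝ) (hτ : 0 < τ) (c x₀ : Fin n → ℝ)
    (y : ℕ → ℝ)
    (hy : ∀ k : ℕ, y k = c ⬝ᵥ (NormedSpace.exp ((-((k : ℝ) * τ)) • L) *ᵥ x₀))
    (ω : Fin n → ℝ) (hω : ω = fun i => (Uᵀ *ᵥ c) i * (Uᵀ *ᵥ x₀) i)
    (S : Finset ℝ)
    (hS : S = ((Finset.univ.image l).filter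
        (fun μ => ∑ j ∈ Finset.univ.filter (fun j => l j = μ), ω j ≠ 0)).image
        (fun μ => Real.exp (-μ * τ)))
    (r : ℕ) (hr : r = S.card) (hr1 : 1 ≤ r)
    (Hr : Matrix (Fin r) (Fin r) ℝ)
    (hHr : Hr = Matrix.of fun s t : Fin r => y ((s : ℕ) + (t : ℕ)))
    (α : Fin r → ℝ) (hα : α = -(Hr⁻¹ *ᵥ fun j : Fin r => y (r + (j : ℕ)))) :
    IsUnit Hr ∧
      (Polynomial.X ^ r + ∑ j : Fin r, Polynomial.C (α j) * Polynomial.X ^ (j : ℕ)) =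
        ∏ z ∈ S, (Polynomial.X - Polynomial.C z) ∧
      ∀ μ ∈ Set.range l,
        (∑ j ∈ Finset.univ.filter (fun j => l j = μ), ω j) ≠ 0 →
        (Polynomial.X ^ r + ∑ j : Fin r, Polynomial.C (α j) * Polynomial.X ^ (j : ℕ)).IsRoot
          (Real.exp (-μ * τ)) := by
  classical
  subst hr
  -- orthogonality facts
  have hUunit : IsUnit U := by
    refine (Matrix.isUnit_iff_isUnit_det U).2 (IsUnit.of_mul_eq_one U.det ?_)
    have := congrArg Matrix.det hU
    rwa [Matrix.det_mul, Matrix.det_transpose, Matrix.det_one] at this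
  have hUinv : U⁻¹ = Uᵀ := Matrix.inv_eq_left_inv hU
  -- injectivity of μ ↦ exp (-μ τ)
  have hinj : ∀ a b : ℝ, Real.exp (-a * τ) = Real.exp (-b * τ) → a = b := by
    intro a b h
    have := Real.exp_injective h
    have := mul_right_cancel₀ (ne_of_gt hτ) this
    linarith
  -- explicit form of the samples
  have hyexp : ∀ k : ℕ, y k = ∑ i, ω i * (Real.exp (-(l i) * τ)) ^ k := by
    intro k
    rw [hy k]
    have hsm : (-((k : ℝ) * τ)) • L
        = U * Matrix.diagonal ((-((k : ℝ) * τ)) • l) * U⁻¹ := by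
      rw [hUinv, hL, Matrix.diagonal_smul, mul_smul_comm, smul_mul_assoc]
    rw [hsm, Matrix.exp_conj U _ hUunit, Matrix.exp_diagonal, hUinv]
    have hd : NormedSpace.exp ((-((k : ℝ) * τ)) • l)
        = fun i => Real.exp (-((k : ℝ) * τ) * l i) := by
      rw [Pi.exp_def]
      funext i
      rw [← Real.exp_eq_exp_ℝ]
      simp [mul_comm]
    rw [hd, ← Matrix.mulVec_mulVec, ← Matrix.mulVec_mulVec, dotProduct_mulVec,
      ← Matrix.mulVec_transpose]
    simp only [dotProduct, Matrix.mulVec_diagonal]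
    refine Finset.sum_congr rfl fun i _ => ?_
    have h1 : -((k : ℝ) * τ) * l i = (k : ℕ) * (-(l i) * τ) := by push_cast; ring
    rw [h1, Real.exp_nat_mul, hω]
    ring
  -- grouped weights
  set w : ℝ → ℝ :=
    fun t => ∑ i ∈ Finset.univ.filter (fun i => Real.exp (-(l i) * τ) = t), ω i with hwdef
  have hfiber : ∀ μ : ℝ,
      Finset.univ.filter (fun i => Real.exp (-(l i) * τ) = Real.exp (-μ * τ))
        = Finset.univ.filter (fun i => l i = μ) := by
    intro μ
    ext i
    simp only [Finset.mem_filter, Finset.mem_univ, true_and]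
    exact ⟨fun h => hinj _ _ h, fun h => by rw [h]⟩
  have hw : ∀ t ∈ S, w t ≠ 0 := by
    intro t ht
    rw [hS] at ht
    obtain ⟨μ, hμ, rfl⟩ := Finset.mem_image.1 ht
    obtain ⟨-, hμ2⟩ := Finset.mem_filter.1 hμ
    show (∑ i ∈ Finset.univ.filter
        (fun i => Real.exp (-(l i) * τ) = Real.exp (-μ * τ)), ω i) ≠ 0
    rw [hfiber μ]
    exact hμ2
  -- samples as a power sum over S
  set f : Fin n → ℝ := fun i => Real.exp (-(l i) * τ) with hf
  have hyS : ∀ k, y k = ∑ t ∈ S, w t * t ^ k := by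
    intro k
    rw [hyexp k]
    have h1 : ∑ i, ω i * f i ^ k
        = ∑ t ∈ Finset.univ.image f, ∑ i ∈ Finset.univ.filter (fun i => f i = t),
            ω i * f i ^ k :=
      (Finset.sum_fiberwise_of_maps_to (fun i _ => Finset.mem_image_of_mem f (Finset.mem_univ i))
        _).symm
    have h2 : ∀ t ∈ Finset.univ.image f,
        (∑ i ∈ Finset.univ.filter (fun i => f i = t), ω i * f i ^ k) = w t * t ^ k := by
      intro t _
      rw [hwdef, Finset.sum_mul]
      refine Finset.sum_congr rfl fun i hi => ?_
      show ω i * Real.exp (-(l i) * τ) ^ k = ω i * t ^ k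
      rw [(Finset.mem_filter.1 hi).2]
    have hsub : S ⊆ Finset.univ.image f := by
      intro t ht
      rw [hS] at ht
      obtain ⟨μ, hμ, rfl⟩ := Finset.mem_image.1 ht
      obtain ⟨hμ1, -⟩ := Finset.mem_filter.1 hμ
      obtain ⟨i, -, rfl⟩ := Finset.mem_image.1 hμ1
      exact Finset.mem_image_of_mem f (Finset.mem_univ i)
    have hzero : ∀ t ∈ Finset.univ.image f, t ∉ S → w t * t ^ k = 0 := by
      intro t ht hts
      obtain ⟨i, -, rfl⟩ := Finset.mem_image.1 ht
      have hwt : w (f i) = 0 := by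
        by_contra hne
        apply hts
        rw [hS]
        refine Finset.mem_image.2 ⟨l i, Finset.mem_filter.2 ⟨Finset.mem_image_of_mem l
          (Finset.mem_univ i), ?_⟩, rfl⟩
        have hne' : (∑ j ∈ Finset.univ.filter
            (fun j => Real.exp (-(l j) * τ) = Real.exp (-(l i) * τ)), ω j) ≠ 0 := hne
        rw [hfiber (l i)] at hne'
        exact hne'
      rw [hwt, zero_mul]
    calc ∑ i, ω i * f i ^ k
        = ∑ t ∈ Finset.univ.image f, w t * t ^ k := by
          rw [h1]; exact Finset.sum_congr rfl h2
      _ = ∑ t ∈ S, w t * t ^ k := (Finset.sum_subset hsub hzero).symm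
  obtain ⟨h1, h2⟩ := prony_aux S w hw y hyS Hr hHr
  have h3 := h2 α hα
  refine ⟨h1, h3, fun μ hμ hne => ?_⟩
  have hmem : Real.exp (-μ * τ) ∈ S := by
    obtain ⟨i, rfl⟩ := hμ
    rw [hS]
    exact Finset.mem_image.2 ⟨l i, Finset.mem_filter.2
      ⟨Finset.mem_image_of_mem l (Finset.mem_univ i), hne⟩, rfl⟩
  rw [h3]
  simp only [Polynomial.IsRoot, Polynomial.eval_prod]
  exact Finset.prod_eq_zero hmem (by simp)
end
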